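/- Let A be a finite set, let B := (A × {0}) ∪ (A × {1}), and define φ : A* → B* by φ(a_1,…,a_n) := (b_1,…,b_n) where b_i := (a_i, 0) if a_i ∉ {a_1,…,a_{i−1}} and b_i := (a_i, 1) otherwise. For u ∈ A*, let S(u) denote the set of letters occurring in u. Define u ≤_E v iff φ(u) ≤_e φ(v) and S(u) = S(v). Then (A*, ≤_E) has no descending chain and no antichain. -/

import Mathlib

/-- The word `φ(u)` obtained from `u` by marking each letter with `0` at its first
occurrence and with `1` at every repeated occurrence; `seen` is the set of letters
occurring before the current position. -/
def phiAux {A : Type*} [DecidableEq A] : List A → List A → List (A × Fin 2)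
  | _, [] => []
  | seen, a :: u => (a, if a ∈ seen then (1 : Fin 2) else 0) :: phiAux (a :: seen) u

def phi {A : Type*} [DecidableEq A] (u : List A) : List (A × Fin 2) :=
  phiAux [] u

/-- `u ≤_E v` iff `φ(u)` embeds into `φ(v)` (as a subsequence) and `u`, `v` have the
same set of letters. -/
def leE {A : Type*} [DecidableEq A] (u v : List A) : Prop :=
  (phi u).Sublist (phi v) ∧ ∀ a : A, a ∈ u ↔ a ∈ v

lemma phiAux_map_fst {A : Type*} [DecidableEq A] :
    ∀ (seen u : List A), (phiAux seen u).map Prod.fst = u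
  | _, [] => rfl
  | seen, a :: u => by simp [phiAux, phiAux_map_fst (a :: seen) u]

lemma phi_injective {A : Type*} [DecidableEq A] : Function.Injective (phi (A := A)) := by
  intro u v h
  have := congrArg (List.map Prod.fst) h
  rwa [phi, phi, phiAux_map_fst, phiAux_map_fst] at this

/-- Theorem 3(1): for a finite alphabet `A`, `(A*, ≤_E)` has no descending chain and
no antichain. -/
theorem stmt_6 (A : Type*) [Fintype A] [DecidableEq A] :
    (¬ ∃ a : ℕ → List A, ∀ i : ℕ, leE (a (i + 1)) (a i) ∧ a (i + 1) ≠ a i) ∧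
    (¬ ∃ a : ℕ → List A, ∀ i j : ℕ, leE (a i) (a j) → i = j) := by
  constructor
  · rintro ⟨a, ha⟩
    have hlt : ∀ i, (phi (a (i + 1))).length < (phi (a i)).length := by
      intro i
      obtain ⟨⟨hs, -⟩, hne⟩ := ha i
      rcases lt_or_eq_of_le hs.length_le with h | h
      · exact h
      · exact absurd (phi_injective (hs.eq_of_length h)) hne
    have key : ∀ n, (phi (a n)).length + n ≤ (phi (a 0)).length := by
      intro n
      induction n with
      | zero => simp
      | succ k ih =>
        have := hlt k
        omega
    have := key ((phi (a 0)).length + 1)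
    omega
  · rintro ⟨a, ha⟩
    obtain ⟨s, hs⟩ := Finite.exists_infinite_fiber (fun i : ℕ => (a i).toFinset)
    have hinf : {i : ℕ | (a i).toFinset = s}.Infinite := by
      rw [← Set.infinite_coe_iff]
      exact hs
    set p : ℕ → Prop := fun i => (a i).toFinset = s with hp
    have hEq : (Set.univ : Set (A × Fin 2)).PartiallyWellOrderedOn (· = ·) := by
      intro f
      obtain ⟨x, y, hxy, hfxy⟩ := Finite.exists_ne_map_eq_of_infinite f
      rcases hxy.lt_or_gt with h | h
      · exact ⟨x, y, h, congrArg Subtype.val hfxy⟩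
      · exact ⟨y, x, h, congrArg Subtype.val hfxy.symm⟩
    have hHig := hEq.partiallyWellOrderedOn_sublistForall₂ (· = ·)
    obtain ⟨m, n, hmn, hsub⟩ :=
      hHig (fun i => ⟨phi (a (Nat.nth p i)), fun x _ => Set.mem_univ x⟩)
    change List.SublistForall₂ (· = ·) (phi (a (Nat.nth p m))) (phi (a (Nat.nth p n))) at hsub
    rw [List.sublistForall₂_iff] at hsub
    obtain ⟨l, hl1, hl2⟩ := hsub
    rw [List.forall₂_eq_eq_eq] at hl1
    subst hl1
    have hm : (a (Nat.nth p m)).toFinset = s := Nat.nth_mem_of_infinite hinf m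
    have hn : (a (Nat.nth p n)).toFinset = s := Nat.nth_mem_of_infinite hinf n
    have hle : leE (a (Nat.nth p m)) (a (Nat.nth p n)) := by
      refine ⟨hl2, fun x => ?_⟩
      rw [← List.mem_toFinset, ← List.mem_toFinset, hm, hn]
    have := ha _ _ hle
    exact absurd ((Nat.nth_strictMono hinf).injective this) hmn.ne
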